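/- Let F be a finite field and let χ̃ be a nontrivial additive character of F (i.e., χ̃ is not the constant character 1). Let m be a positive integer and R = Matrix (Fin m) (Fin m) F. Then the map sending M ∈ R to the additive character X ↦ χ̃(trace(X*M)) of R is a bijection from R onto the group of additive characters of R. In particular, the character A ↦ χ̃(trace(A)) is a generating character of R, and it is symmetric: χ̃(trace(A*B)) = χ̃(trace(B*A)) for all A, B ∈ R. -/

import Mathlib

/-- The additive character `X ↦ χ(trace (X * M))` of the matrix ring, built from an additive
character `χ` of the field `F` and a matrix `M`. -/
noncomputable def traceChar {F : Type*} [Field F] {m : ℕ}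
    (χ : AddChar F ℂˣ) (M : Matrix (Fin m) (Fin m) F) :
    AddChar (Matrix (Fin m) (Fin m) F) ℂˣ :=
  χ.compAddMonoidHom ((Matrix.traceAddMonoidHom (Fin m) F).comp (AddMonoidHom.mulRight M))

lemma traceChar_apply {F : Type*} [Field F] {m : ℕ}
    (χ : AddChar F ℂˣ) (M X : Matrix (Fin m) (Fin m) F) :
    traceChar χ M X = χ (Matrix.trace (X * M)) := rfl

/-- `AddChar A ℂˣ` is equivalent to `AddChar A ℂ` when `A` is an additive group. -/
def addCharUnitsEquiv (A : Type*) [AddCommGroup A] : AddChar A ℂˣ ≃ AddChar A ℂ where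
  toFun ψ := (Units.coeHom ℂ).compAddChar ψ
  invFun ψ := AddChar.toMonoidHomEquiv.symm ψ.toMonoidHom.toHomUnits
  left_inv ψ := by ext a; rfl
  right_inv ψ := by ext a; rfl

lemma trace_stdBasisMatrix_mul {F : Type*} [CommRing F] {m : ℕ}
    (i j : Fin m) (c : F) (M : Matrix (Fin m) (Fin m) F) :
    Matrix.trace (Matrix.single i j c * M) = c * M j i := by
  simp [Matrix.trace, Matrix.diag, Matrix.mul_apply, Matrix.single, ite_and,
    Finset.sum_ite_eq]

theorem trace_character_generating_and_symmetric
    {F : Type*} [Field F] [Fintype F] (χ : AddChar F ℂˣ) (hχ : χ ≠ 1)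
    (m : ℕ) (hm : 0 < m) :
    Function.Bijective (traceChar (F := F) (m := m) χ) ∧
    (∀ ψ : AddChar (Matrix (Fin m) (Fin m) F) ℂˣ,
      ∃ M : Matrix (Fin m) (Fin m) F, ∀ X : Matrix (Fin m) (Fin m) F,
        ψ X = χ (Matrix.trace (X * M))) ∧
    (∀ A B : Matrix (Fin m) (Fin m) F,
      χ (Matrix.trace (A * B)) = χ (Matrix.trace (B * A))) := by
  classical
  have hinj : Function.Injective (traceChar (F := F) (m := m) χ) := by
    intro M₁ M₂ h
    ext i j
    by_contra hne
    have hy : M₁ i j - M₂ i j ≠ 0 := sub_ne_zero.mpr hne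
    obtain ⟨x, hx⟩ := AddChar.ne_one_iff.mp hχ
    have hc : ∀ c : F, χ (c * M₁ i j) = χ (c * M₂ i j) := by
      intro c
      have := DFunLike.congr_fun h (Matrix.single j i c)
      rwa [traceChar_apply, traceChar_apply, trace_stdBasisMatrix_mul,
        trace_stdBasisMatrix_mul] at this
    have := hc (x * (M₁ i j - M₂ i j)⁻¹)
    rw [mul_assoc, mul_assoc] at this
    have h1 : (M₁ i j - M₂ i j)⁻¹ * M₁ i j - (M₁ i j - M₂ i j)⁻¹ * M₂ i j = 1 := by
      rw [← mul_sub, inv_mul_cancel₀ hy]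
    have h2 : (M₁ i j - M₂ i j)⁻¹ * M₁ i j =
        1 + (M₁ i j - M₂ i j)⁻¹ * M₂ i j := by linear_combination h1
    rw [h2, mul_add, mul_one, AddChar.map_add_eq_mul] at this
    exact hx (mul_eq_right.mp this)
  haveI : Fintype (AddChar (Matrix (Fin m) (Fin m) F) ℂˣ) :=
    Fintype.ofEquiv _ (addCharUnitsEquiv _).symm
  have hcard : Fintype.card (AddChar (Matrix (Fin m) (Fin m) F) ℂˣ)
      = Fintype.card (Matrix (Fin m) (Fin m) F) := by
    rw [Fintype.card_congr (addCharUnitsEquiv _), AddChar.card_eq]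
  have hbij : Function.Bijective (traceChar (F := F) (m := m) χ) :=
    (Fintype.bijective_iff_injective_and_card _).2 ⟨hinj, hcard.symm⟩
  refine ⟨hbij, ?_, ?_⟩
  · intro ψ
    obtain ⟨M, hM⟩ := hbij.2 ψ
    exact ⟨M, fun X => by rw [← hM, traceChar_apply]⟩
  · intro A B
    rw [Matrix.trace_mul_comm]
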